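/- Let p ≥ 2 be real, A a real k × m matrix, b ∈ ℝ^k, g ∈ ℝ^m, r ∈ ℝ^m with r ≥ 0 entrywise, and s ≥ 0. Define obj₁(x) = gᵀx − h_p(r, s, x). Let x₀ satisfy Ax₀ = b, and define the residual data g' = 2^p(g − ∇_x h_p(r, s, x)|_{x = x₀}) and r' = r + s|x₀|^{p-2}, with residual objective obj₂(δ) = (g')ᵀδ − h_p(r', s, δ). Then for every x̃ with Ax̃ = b, the vector δ̃ = x̃ − x₀ satisfies Aδ̃ = 0 and obj₂(δ̃) ≥ 2^p (obj₁(x̃) − obj₁(x₀)). In particular, if x* maximizes obj₁ subject to Ax = b, the residual problem of maximizing obj₂ subject to Aδ = 0 has optimal value at least 2^p(obj₁(x*) − obj₁(x₀)). -/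

import Mathlib

open Finset Matrix

set_option maxHeartbeats 1000000

/-- The `r`-smoothed `s`-weighted `p`-norm:
`h_p(r, s, x) = Σ_i (r_i x_i^2 + s |x_i|^p)`. -/
noncomputable def hP (p : ℝ) {m : ℕ} (r : Fin m → ℝ) (s : ℝ) (x : Fin m → ℝ) : ℝ :=
  ∑ i, (r i * x i ^ 2 + s * |x i| ^ p)

/-- The gradient of `h_p(r, s, ·)` at `x`: its `i`-th entry is
`2 r_i x_i + p s |x_i|^{p-2} x_i`. -/
noncomputable def gradHP (p : ℝ) {m : ℕ} (r : Fin m → ℝ) (s : ℝ) (x : Fin m → ℝ) :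
    Fin m → ℝ :=
  fun i => 2 * r i * x i + p * s * |x i| ^ (p - 2) * x i

/-- The objective `obj(x) = gᵀx − h_p(r, s, x)` of a smoothed `p`-norm problem. -/
noncomputable def objFn (p : ℝ) {m : ℕ} (g r : Fin m → ℝ) (s : ℝ) (x : Fin m → ℝ) : ℝ :=
  (∑ i, g i * x i) - hP p r s x

private 
lemma star_ineq {p : ℝ} (hp : 2 ≤ p) (u : ℝ) :
    1 + p * u + ((2:ℝ) ^ p)⁻¹ * (u ^ 2 + |u| ^ p) ≤ |1 + u| ^ p := by
  have hp0 : (0:ℝ) < p := by linarith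
  have hp1 : (1:ℝ) < p := by linarith
  have h2p : (0:ℝ) < (2:ℝ) ^ p := Real.rpow_pos_of_pos two_pos p
  set c : ℝ := ((2:ℝ) ^ p)⁻¹ with hcdef
  have hc0 : 0 < c := inv_pos.mpr h2p
  have hinv : c * (2:ℝ) ^ p = 1 := inv_mul_cancel₀ h2p.ne'
  have h4 : (4:ℝ) ≤ (2:ℝ) ^ p := by
    have h := Real.rpow_le_rpow_of_exponent_le one_le_two hp
    rw [show ((2:ℝ) ^ (2:ℝ)) = 4 by
      rw [show (2:ℝ) = ((2:ℕ):ℝ) by norm_num, Real.rpow_natCast]; norm_num] at h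
    exact h
  have hc4 : c ≤ 1/4 := by
    rw [hcdef, inv_le_comm₀ (by linarith) (by norm_num)]
    linarith
  have h2ple : 2 * p ≤ (2:ℝ) ^ p := by
    have hb : 1 + (p - 1) * 1 ≤ (1 + 1) ^ (p - 1) :=
      one_add_mul_self_le_rpow_one_add (by norm_num) (by linarith)
    have h2 : (2:ℝ) ^ p = (2:ℝ) ^ (p - 1) * 2 := by
      rw [← Real.rpow_add_one (by norm_num : (2:ℝ) ≠ 0) (p - 1)]; norm_num
    rw [h2]
    norm_num at hb
    linarith
  have hcp : c * p ≤ 1/2 := by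
    have h := mul_le_mul_of_nonneg_left h2ple hc0.le
    rw [hinv] at h
    linarith
  have epow : ∀ w : ℝ, 0 ≤ w → w ^ (p - 2) * w = w ^ (p - 1) := by
    intro w hw
    rcases eq_or_lt_of_le hw with h | h
    · rw [← h, Real.zero_rpow (show p - 1 ≠ 0 by intro hh; linarith [sub_eq_zero.mp hh]), mul_zero]
    · rw [show p - 1 = (p - 2) + 1 by ring, Real.rpow_add_one h.ne']
  set F : ℝ → ℝ := fun u => |1 + u| ^ p - (1 + p * u + c * (u ^ 2 + |u| ^ p)) with hFdef
  have hF' : ∀ u : ℝ,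
      HasDerivAt F (p * |1 + u| ^ (p - 2) * (1 + u) - (p + c * (2 * u + p * |u| ^ (p - 2) * u))) u := by
    intro u
    have h1 : HasDerivAt (fun u : ℝ => |1 + u| ^ p) (p * |1 + u| ^ (p - 2) * (1 + u)) u := by
      have hcomp := (hasDerivAt_abs_rpow (1 + u) hp1).comp u ((hasDerivAt_id u).const_add 1)
      simpa [Function.comp_def] using hcomp
    have ha : HasDerivAt (fun u : ℝ => u ^ 2) (2 * u) u := by simpa using hasDerivAt_pow 2 u
    have hb := hasDerivAt_abs_rpow u hp1
    have h2 : HasDerivAt (fun u : ℝ => 1 + p * u + c * (u ^ 2 + |u| ^ p))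
        (p + c * (2 * u + p * |u| ^ (p - 2) * u)) u := by
      have := (((hasDerivAt_id u).const_mul p).const_add 1).add ((ha.add hb).const_mul c)
      exact this.congr_deriv (by ring)
    exact h1.sub h2
  have hF0 : F 0 = 0 := by
    simp [hFdef, Real.one_rpow, Real.zero_rpow hp0.ne']
  have hFdiff : Differentiable ℝ F := fun u => (hF' u).differentiableAt
  have hderivpos : ∀ u : ℝ, 0 < u → 0 ≤ deriv F u := by
    intro u hu
    rw [(hF' u).deriv]
    rw [abs_of_pos hu, abs_of_pos (show (0:ℝ) < 1 + u by linarith)]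
    rw [mul_assoc p ((1+u) ^ (p-2)) (1+u), epow (1+u) (by linarith),
        mul_assoc p (u ^ (p-2)) u, epow u hu.le]
    have hB : 1 + (p - 1) * u ≤ (1 + u) ^ (p - 1) :=
      one_add_mul_self_le_rpow_one_add (by linarith) (by linarith)
    rcases le_total u 1 with hu1 | hu1
    · have hue : u ^ (p - 1) ≤ u := by
        calc u ^ (p - 1) ≤ u ^ (1:ℝ) := Real.rpow_le_rpow_of_exponent_ge hu hu1 (by linarith)
        _ = u := Real.rpow_one u
      nlinarith [mul_le_mul_of_nonneg_left hB hp0.le,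
        mul_le_mul_of_nonneg_right hc4 (by linarith : (0:ℝ) ≤ 2 * u),
        mul_le_mul_of_nonneg_left hue (mul_nonneg hc0.le hp0.le),
        mul_le_mul_of_nonneg_right hcp hu.le,
        mul_le_mul_of_nonneg_right (show (2:ℝ) ≤ p * (p - 1) by nlinarith) hu.le]
    · have h1 : u ^ (p - 1) ≤ (1 + u) ^ (p - 1) :=
        Real.rpow_le_rpow hu.le (by linarith) (by linarith)
      have h2 : p ≤ (1 + u) ^ (p - 1) := by nlinarith [hB]
      have h3 : u ≤ u ^ (p - 1) := by
        calc u = u ^ (1:ℝ) := (Real.rpow_one u).symm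
        _ ≤ u ^ (p - 1) := Real.rpow_le_rpow_of_exponent_le hu1 (by linarith)
      have hXnn : 0 ≤ u ^ (p - 1) := Real.rpow_nonneg hu.le _
      nlinarith [mul_le_mul_of_nonneg_left h1 (by linarith : (0:ℝ) ≤ p/2),
        mul_le_mul_of_nonneg_left h2 (by linarith : (0:ℝ) ≤ p/2),
        mul_le_mul_of_nonneg_right hcp hXnn,
        mul_le_mul_of_nonneg_right hc4 hu.le, h3, hXnn,
        mul_nonneg (show (0:ℝ) ≤ p - 2 by linarith) hXnn]
  have hderivneg : ∀ u : ℝ, u < 0 → deriv F u ≤ 0 := by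
    intro u hu
    rw [(hF' u).deriv]
    rw [abs_of_neg hu]
    rw [mul_assoc p ((-u) ^ (p-2)) u,
        show (-u) ^ (p-2) * u = -((-u) ^ (p-1)) by
          rw [← epow (-u) (by linarith)]; ring]
    rcases lt_or_ge (-1) u with hu1 | hu1
    · -- -1 < u < 0
      rw [abs_of_pos (show (0:ℝ) < 1 + u by linarith)]
      rw [mul_assoc p ((1+u) ^ (p-2)) (1+u), epow (1+u) (by linarith)]
      have h1 : (1 + u) ^ (p - 1) ≤ 1 + u := by
        calc (1+u) ^ (p-1) ≤ (1+u) ^ (1:ℝ) :=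
              Real.rpow_le_rpow_of_exponent_ge (by linarith) (by linarith) (by linarith)
        _ = 1 + u := Real.rpow_one _
      have h2 : (-u) ^ (p - 1) ≤ -u := by
        calc (-u) ^ (p-1) ≤ (-u) ^ (1:ℝ) :=
              Real.rpow_le_rpow_of_exponent_ge (by linarith) (by linarith) (by linarith)
        _ = -u := Real.rpow_one _
      nlinarith [mul_le_mul_of_nonneg_left h1 hp0.le,
        mul_le_mul_of_nonneg_left h2 (mul_nonneg hc0.le hp0.le),
        mul_le_mul_of_nonneg_right hcp (by linarith : (0:ℝ) ≤ -u),
        mul_le_mul_of_nonneg_right hc4 (by linarith : (0:ℝ) ≤ -2 * u)]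
    · -- u ≤ -1
      rw [abs_of_nonpos (show 1 + u ≤ 0 by linarith)]
      rw [mul_assoc p ((-(1+u)) ^ (p-2)) (1+u),
          show (-(1+u)) ^ (p-2) * (1+u) = -((-(1+u)) ^ (p-1)) by
            rw [← epow (-(1+u)) (by linarith)]; ring]
      set v : ℝ := -u with hvdef
      set w : ℝ := -(1+u) with hwdef
      have hv1 : 1 ≤ v := by rw [hvdef]; linarith
      have hw0 : 0 ≤ w := by rw [hwdef]; linarith
      have hvw : v = 1 + w := by rw [hvdef, hwdef]; ring
      have hwp : 0 ≤ w ^ (p-1) := Real.rpow_nonneg hw0 _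
      have h2p1 : (2:ℝ) ^ (p-1) * 2 = (2:ℝ) ^ p := by
        rw [← Real.rpow_add_one (by norm_num : (2:ℝ) ≠ 0) (p-1)]; norm_num
      have hc2 : c * (2:ℝ) ^ (p-1) = 1/2 := by
        have h := hinv
        linear_combination (c/2) * h2p1 + (1/2) * h
      have hkey : v ^ (p-1) ≤ (2:ℝ) ^ (p-1) * (1 + w ^ (p-1)) := by
        have h2p1pos : (0:ℝ) < (2:ℝ) ^ (p-1) := Real.rpow_pos_of_pos two_pos _
        rcases le_total w 1 with hw1 | hw1
        · have : v ^ (p-1) ≤ (2:ℝ) ^ (p-1) :=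
            Real.rpow_le_rpow (by linarith) (by rw [hvw]; linarith) (by linarith)
          nlinarith
        · have hv2w : v ≤ 2 * w := by rw [hvw]; linarith
          have : v ^ (p-1) ≤ (2*w) ^ (p-1) :=
            Real.rpow_le_rpow (by linarith) hv2w (by linarith)
          rw [Real.mul_rpow (by norm_num) (by linarith)] at this
          nlinarith [mul_pos h2p1pos (show (0:ℝ) < 1 by norm_num), h2p1pos]
      have hk1 : c * p * v ^ (p-1) ≤ p/2 * (1 + w ^ (p-1)) := by
        calc c * p * v ^ (p-1) ≤ c * p * ((2:ℝ) ^ (p-1) * (1 + w ^ (p-1))) :=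
              mul_le_mul_of_nonneg_left hkey (mul_nonneg hc0.le hp0.le)
        _ = (c * (2:ℝ) ^ (p-1)) * (p * (1 + w ^ (p-1))) := by ring
        _ = p/2 * (1 + w ^ (p-1)) := by rw [hc2]; ring
      have hk2 : 2 * c * v ^ (p-1) ≤ 1 + w ^ (p-1) := by
        calc 2 * c * v ^ (p-1) ≤ 2 * c * ((2:ℝ) ^ (p-1) * (1 + w ^ (p-1))) :=
              mul_le_mul_of_nonneg_left hkey (by linarith)
        _ = (c * (2:ℝ) ^ (p-1)) * (2 * (1 + w ^ (p-1))) := by ring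
        _ = 1 + w ^ (p-1) := by rw [hc2]; ring
      have hk3 : v ≤ v ^ (p-1) := by
        calc v = v ^ (1:ℝ) := (Real.rpow_one v).symm
        _ ≤ v ^ (p-1) := Real.rpow_le_rpow_of_exponent_le hv1 (by linarith)
      have hvnn : 0 ≤ v ^ (p-1) := Real.rpow_nonneg (by linarith) _
      have hu2cv : u = -v := by rw [hvdef]; ring
      nlinarith [hk1, hk2, hk3, hwp, hvnn, mul_le_mul_of_nonneg_left hk3 (by linarith : (0:ℝ) ≤ 2 * c),
        mul_nonneg (show (0:ℝ) ≤ p/2 - 1 by linarith) hwp]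
  have hFpos : ∀ u : ℝ, 0 ≤ F u := by
    intro u
    rcases le_total 0 u with hu | hu
    · have hmono : MonotoneOn F (Set.Ici 0) :=
        monotoneOn_of_deriv_nonneg (convex_Ici 0) hFdiff.continuous.continuousOn
          hFdiff.differentiableOn
          (fun x hx => hderivpos x (by simpa [interior_Ici] using hx))
      have := hmono Set.self_mem_Ici (show u ∈ Set.Ici 0 from hu) hu
      rw [hF0] at this
      exact this
    · have hanti : AntitoneOn F (Set.Iic 0) :=
        antitoneOn_of_deriv_nonpos (convex_Iic 0) hFdiff.continuous.continuousOn
          hFdiff.differentiableOn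
          (fun x hx => hderivneg x (by simpa [interior_Iic] using hx))
      have := hanti (show u ∈ Set.Iic 0 from hu) Set.self_mem_Iic hu
      rw [hF0] at this
      exact this
  have := hFpos u
  simp only [hFdef] at this
  linarith

private lemma key_pos {p : ℝ} (hp : 2 ≤ p) {x : ℝ} (hx : 0 < x) (d : ℝ) :
    |x| ^ p + p * |x| ^ (p - 2) * x * d +
      ((2:ℝ) ^ p)⁻¹ * (|x| ^ (p - 2) * d ^ 2 + |d| ^ p) ≤ |x + d| ^ p := by
  have hx0 : x ≠ 0 := ne_of_gt hx
  have hxp : (0:ℝ) < x ^ p := Real.rpow_pos_of_pos hx p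
  have hX : (0:ℝ) < x ^ (p - 2) := Real.rpow_pos_of_pos hx _
  have h := star_ineq hp (d / x)
  have habs1 : |1 + d / x| = |x + d| / x := by
    rw [show 1 + d / x = (x + d) / x by field_simp, abs_div, abs_of_pos hx]
  have habs2 : |d / x| = |d| / x := by rw [abs_div, abs_of_pos hx]
  rw [habs1, habs2, Real.div_rpow (abs_nonneg _) hx.le, Real.div_rpow (abs_nonneg _) hx.le] at h
  have h2 := mul_le_mul_of_nonneg_left h hxp.le
  have eC : x ^ p = x ^ (p - 2) * x ^ 2 := by
    rw [← Real.rpow_natCast x 2, ← Real.rpow_add hx]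
    norm_num
  have e1 : x ^ p * (1 + p * (d / x) + ((2:ℝ) ^ p)⁻¹ * ((d / x) ^ 2 + |d| ^ p / x ^ p)) =
      x ^ p + p * x ^ (p - 2) * x * d + ((2:ℝ) ^ p)⁻¹ * (x ^ (p - 2) * d ^ 2 + |d| ^ p) := by
    rw [eC]; field_simp
  have e2 : x ^ p * (|x + d| ^ p / x ^ p) = |x + d| ^ p := by field_simp
  rw [e1, e2] at h2
  rw [abs_of_pos hx]
  exact h2

lemma keyK {p : ℝ} (hp : 2 ≤ p) (x d : ℝ) :
    |x| ^ p + p * |x| ^ (p - 2) * x * d +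
      ((2:ℝ) ^ p)⁻¹ * (|x| ^ (p - 2) * d ^ 2 + |d| ^ p) ≤ |x + d| ^ p := by
  have h2p : (0:ℝ) < (2:ℝ) ^ p := Real.rpow_pos_of_pos two_pos p
  have h4 : (4:ℝ) ≤ (2:ℝ) ^ p := by
    have h := Real.rpow_le_rpow_of_exponent_le one_le_two hp
    rw [show ((2:ℝ) ^ (2:ℝ)) = 4 by
      rw [show (2:ℝ) = ((2:ℕ):ℝ) by norm_num, Real.rpow_natCast]; norm_num] at h
    exact h
  have hc1 : ((2:ℝ) ^ p)⁻¹ ≤ 1 := by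
    rw [inv_le_one_iff₀]; right; linarith
  have hc0 : (0:ℝ) < ((2:ℝ) ^ p)⁻¹ := inv_pos.mpr h2p
  rcases lt_trichotomy x 0 with hx | hx | hx
  · have h := key_pos hp (show (0:ℝ) < -x by linarith) (-d)
    rw [show -x + -d = -(x + d) by ring, abs_neg, abs_neg, abs_neg] at h
    calc |x| ^ p + p * |x| ^ (p - 2) * x * d +
          ((2:ℝ) ^ p)⁻¹ * (|x| ^ (p - 2) * d ^ 2 + |d| ^ p)
        = |x| ^ p + p * |x| ^ (p - 2) * -x * -d +
          ((2:ℝ) ^ p)⁻¹ * (|x| ^ (p - 2) * (-d) ^ 2 + |d| ^ p) := by ring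
      _ ≤ |x + d| ^ p := h
  · subst hx
    simp only [abs_zero, zero_add]
    rw [Real.zero_rpow (show p ≠ 0 by linarith)]
    have hdp : 0 ≤ |d| ^ p := Real.rpow_nonneg (abs_nonneg d) p
    rcases eq_or_lt_of_le hp with h2 | h2
    · rw [← h2]
      norm_num
      nlinarith [sq_nonneg d]
    · rw [Real.zero_rpow (show p - 2 ≠ 0 by intro hh; linarith [sub_eq_zero.mp hh])]
      norm_num
      nlinarith [hdp]
  · exact key_pos hp hx d

private lemma percoord {p : ℝ} (hp : 2 ≤ p) {r s : ℝ} (hr : 0 ≤ r) (hs : 0 ≤ s) (g x t : ℝ) :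
    2 ^ p * ((g * t - (r * t ^ 2 + s * |t| ^ p)) - (g * x - (r * x ^ 2 + s * |x| ^ p))) ≤
      (2 ^ p * (g - (2 * r * x + p * s * |x| ^ (p - 2) * x))) * (t - x) -
        ((r + s * |x| ^ (p - 2)) * (t - x) ^ 2 + s * |t - x| ^ p) := by
  have h2p : (0:ℝ) < (2:ℝ) ^ p := Real.rpow_pos_of_pos two_pos p
  have h4 : (4:ℝ) ≤ (2:ℝ) ^ p := by
    have h := Real.rpow_le_rpow_of_exponent_le one_le_two hp
    rw [show ((2:ℝ) ^ (2:ℝ)) = 4 by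
      rw [show (2:ℝ) = ((2:ℕ):ℝ) by norm_num, Real.rpow_natCast]; norm_num] at h
    exact h
  have hinv : (2:ℝ) ^ p * ((2:ℝ) ^ p)⁻¹ = 1 := mul_inv_cancel₀ h2p.ne'
  have hK := keyK hp x (t - x)
  rw [show x + (t - x) = t by ring] at hK
  have hK2 : (2:ℝ) ^ p * (|x| ^ p + p * |x| ^ (p - 2) * x * (t - x)) +
      (|x| ^ (p - 2) * (t - x) ^ 2 + |t - x| ^ p) ≤ (2:ℝ) ^ p * |t| ^ p := by
    have h' := mul_le_mul_of_nonneg_left hK h2p.le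
    have hrw : (2:ℝ) ^ p * (|x| ^ p + p * |x| ^ (p - 2) * x * (t - x) +
        ((2:ℝ) ^ p)⁻¹ * (|x| ^ (p - 2) * (t - x) ^ 2 + |t - x| ^ p)) =
        (2:ℝ) ^ p * (|x| ^ p + p * |x| ^ (p - 2) * x * (t - x)) +
        ((2:ℝ) ^ p * ((2:ℝ) ^ p)⁻¹) * (|x| ^ (p - 2) * (t - x) ^ 2 + |t - x| ^ p) := by
      ring
    rw [hrw, hinv, one_mul] at h'
    exact h'
  have hK3 := mul_le_mul_of_nonneg_left hK2 hs
  nlinarith [hK3, mul_nonneg (mul_nonneg (show (0:ℝ) ≤ (2:ℝ) ^ p - 1 by linarith) hr)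
    (sq_nonneg (t - x))]


/-- Iterative refinement, residual direction: for a feasible `x̃`, the vector
`δ̃ = x̃ − x₀` is feasible for the residual problem and achieves residual objective
at least `2^p (obj₁(x̃) − obj₁(x₀))`; in particular the optimal value of the residual
problem is at least `2^p (obj₁(x*) − obj₁(x₀))` for a maximizer `x*`. -/
theorem residual_problem_lower_bound (p : ℝ) (hp : 2 ≤ p) (k m : ℕ)
    (A : Matrix (Fin k) (Fin m) ℝ) (b : Fin k → ℝ) (g r : Fin m → ℝ)
    (hr : ∀ i, 0 ≤ r i) (s : ℝ) (hs : 0 ≤ s)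
    (x₀ : Fin m → ℝ) (hx₀ : A.mulVec x₀ = b)
    (g' r' : Fin m → ℝ)
    (hg' : g' = fun i => 2 ^ p * (g i - gradHP p r s x₀ i))
    (hr' : r' = fun i => r i + s * |x₀ i| ^ (p - 2)) :
    (∀ xt : Fin m → ℝ, A.mulVec xt = b →
        A.mulVec (xt - x₀) = 0 ∧
          2 ^ p * (objFn p g r s xt - objFn p g r s x₀) ≤ objFn p g' r' s (xt - x₀)) ∧
      (∀ xstar : Fin m → ℝ, A.mulVec xstar = b →
        (∀ y : Fin m → ℝ, A.mulVec y = b → objFn p g r s y ≤ objFn p g r s xstar) →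
        ∃ δ : Fin m → ℝ, A.mulVec δ = 0 ∧
          2 ^ p * (objFn p g r s xstar - objFn p g r s x₀) ≤ objFn p g' r' s δ) := by
  have expand : ∀ (G R X : Fin m → ℝ),
      objFn p G R s X = ∑ i, (G i * X i - (R i * X i ^ 2 + s * |X i| ^ p)) := by
    intro G R X
    rw [objFn, hP, ← Finset.sum_sub_distrib]
  have main : ∀ xt : Fin m → ℝ, A.mulVec xt = b →
      A.mulVec (xt - x₀) = 0 ∧
        2 ^ p * (objFn p g r s xt - objFn p g r s x₀) ≤ objFn p g' r' s (xt - x₀) := by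
    intro xt hxt
    constructor
    · rw [Matrix.mulVec_sub, hxt, hx₀, sub_self]
    · rw [expand g r xt, expand g r x₀, expand g' r' (xt - x₀), ← Finset.sum_sub_distrib,
        Finset.mul_sum]
      apply Finset.sum_le_sum
      intro i _
      have h := percoord hp (hr i) hs (g i) (x₀ i) (xt i)
      simp only [hg', hr', gradHP, Pi.sub_apply]
      convert h using 2 <;> ring
  exact ⟨main, fun xs hxs _ => ⟨xs - x₀, (main xs hxs).1, (main xs hxs).2⟩⟩
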